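/- If a 3-tournament on n vertices contains a cycle, then it contains a cycle of length at most C(n−1,2) + 1. -/

import Mathlib

/-- The signed indicator of the directed edge `u → v`, as a (skew-symmetric) function on
ordered pairs of vertices: entry `+1` at `(u, v)`, `-1` at `(v, u)`, `0` elsewhere.
A vector indexed by 2-sets `{i < j}` with entry `+1` for an induced edge `i → j` and `-1`
for `j → i` is recorded by its values on ordered pairs. -/
def edgeVec {V : Type*} [DecidableEq V] (u v : V) : V → V → ℝ := fun i j =>
  (if i = u ∧ j = v then 1 else 0) - (if i = v ∧ j = u then 1 else 0)

/-- The signed incidence vector of the oriented triple `→abc`, which induces the directed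
edges `a → b`, `b → c`, `c → a`. -/
def incVec {V : Type*} [DecidableEq V] (a b c : V) : V → V → ℝ :=
  edgeVec a b + edgeVec b c + edgeVec c a

/-- Vertices are `Fin n`; an (oriented) triple is recorded as an ordered triple. -/
abbrev Triple (n : ℕ) := Fin n × Fin n × Fin n

/-- The ordered triple `(a, b, c)` is sorted: `a < b < c`. -/
def Sorted3 {n : ℕ} (p : Triple n) : Prop := p.1 < p.2.1 ∧ p.2.1 < p.2.2

instance {n : ℕ} : DecidablePred (Sorted3 (n := n)) := fun _ => instDecidableAnd

/-- An orientation function `ω` assigns to each (sorted) triple one of its two cyclic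
orientations: `true` for `→abc`, `false` for `→acb`.  The incidence vector of the triple
`{a, b, c}` under this orientation. -/
def oVec {n : ℕ} (ω : Triple n → Bool) (p : Triple n) : Fin n → Fin n → ℝ :=
  if ω p then incVec p.1 p.2.1 p.2.2 else incVec p.1 p.2.2 p.2.1

/-- `C` is a cycle of the oriented 3-graph with (sorted) triple set `D` and orientation `ω`:
a nonempty subset of `D` admitting strictly positive weights whose weighted incidence
vectors sum to zero. -/
def IsCycle {n : ℕ} (ω : Triple n → Bool) (D : Finset (Triple n)) (C : Finset (Triple n)) :
    Prop :=
  C.Nonempty ∧ C ⊆ D ∧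
    ∃ α : Triple n → ℝ, (∀ p ∈ C, 0 < α p) ∧ ∑ p ∈ C, α p • oVec ω p = 0

/-- The triple set of the complete oriented 3-graph (3-tournament) on `n` vertices: all
sorted triples. -/
def allTriples (n : ℕ) : Finset (Triple n) := Finset.univ.filter Sorted3

/-- The column space of the incidence matrix of the 3-tournament on `n` vertices with
orientation `ω`: the span of the incidence vectors of all its oriented triples. -/
def colSpace {n : ℕ} (ω : Triple n → Bool) : Submodule ℝ (Fin n → Fin n → ℝ) :=
  Submodule.span ℝ (oVec ω '' {p | Sorted3 p})

/- ### Auxiliary lemmas -/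

lemma incVec_decomp {n : ℕ} (z a b c : Fin n) :
    incVec a b c = incVec z a b + incVec z b c + incVec z c a := by
  funext i j
  simp only [incVec, edgeVec, Pi.add_apply]
  ring

lemma incVec_swap {n : ℕ} (z u v : Fin n) : incVec z v u = -incVec z u v := by
  funext i j
  simp only [incVec, edgeVec, Pi.add_apply, Pi.neg_apply]
  ring

lemma incVec_self₁ {n : ℕ} (z v : Fin n) : incVec z z v = 0 := by
  funext i j
  simp only [incVec, edgeVec, Pi.add_apply, Pi.zero_apply]
  ring

lemma incVec_self₂ {n : ℕ} (z v : Fin n) : incVec z v v = 0 := by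
  funext i j
  simp only [incVec, edgeVec, Pi.add_apply, Pi.zero_apply]
  ring

lemma incVec_self₃ {n : ℕ} (z v : Fin n) : incVec z v z = 0 := by
  funext i j
  simp only [incVec, edgeVec, Pi.add_apply, Pi.zero_apply]
  ring

/-- The set of ordered pairs `(a, b)` with `0 < a < b` in `Fin n`. -/
def pairSet (n : ℕ) [NeZero n] : Finset (Fin n × Fin n) :=
  Finset.univ.filter (fun q => 0 < q.1 ∧ q.1 < q.2)

/-- The spanning set: incidence vectors of triangles through vertex `0`. -/
noncomputable def spanSet (n : ℕ) [NeZero n] : Finset (Fin n → Fin n → ℝ) :=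
  (pairSet n).image fun q => incVec 0 q.1 q.2

/-- The subspace spanned by the triangles through `0`. -/
noncomputable def Msp (n : ℕ) [NeZero n] : Submodule ℝ (Fin n → Fin n → ℝ) :=
  Submodule.span ℝ (spanSet n : Set (Fin n → Fin n → ℝ))

lemma incVec_zero_mem {n : ℕ} [NeZero n] (u v : Fin n) : incVec 0 u v ∈ Msp n := by
  rcases eq_or_ne u 0 with rfl | hu
  · rw [incVec_self₁]; exact zero_mem _
  rcases eq_or_ne v 0 with rfl | hv
  · rw [incVec_self₃]; exact zero_mem _
  rcases lt_trichotomy u v with h | rfl | h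
  · apply Submodule.subset_span
    simp only [spanSet, Finset.coe_image, Set.mem_image, Finset.mem_coe]
    exact ⟨(u, v), by
      simp only [pairSet, Finset.mem_filter, Finset.mem_univ, true_and]
      exact ⟨lt_of_le_of_ne (Fin.zero_le u) (Ne.symm hu), h⟩, rfl⟩
  · rw [incVec_self₂]; exact zero_mem _
  · rw [incVec_swap]
    apply neg_mem
    apply Submodule.subset_span
    simp only [spanSet, Finset.coe_image, Set.mem_image, Finset.mem_coe]
    exact ⟨(v, u), by
      simp only [pairSet, Finset.mem_filter, Finset.mem_univ, true_and]
      exact ⟨lt_of_le_of_ne (Fin.zero_le v) (Ne.symm hv), h⟩, rfl⟩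

lemma incVec_mem {n : ℕ} [NeZero n] (a b c : Fin n) : incVec a b c ∈ Msp n := by
  rw [incVec_decomp 0 a b c]
  exact add_mem (add_mem (incVec_zero_mem a b) (incVec_zero_mem b c)) (incVec_zero_mem c a)

lemma oVec_mem {n : ℕ} [NeZero n] (ω : Triple n → Bool) (p : Triple n) :
    oVec ω p ∈ Msp n := by
  unfold oVec
  split <;> exact incVec_mem _ _ _

lemma pairSet_card {n : ℕ} [NeZero n] : (pairSet n).card ≤ (n - 1).choose 2 := by
  have hcard : (((Finset.univ : Finset (Fin n)).erase 0).powersetCard 2).card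
      = (n - 1).choose 2 := by
    rw [Finset.card_powersetCard, Finset.card_erase_of_mem (Finset.mem_univ _),
      Finset.card_univ, Fintype.card_fin]
  rw [← hcard]
  apply Finset.card_le_card_of_injOn (fun q => ({q.1, q.2} : Finset (Fin n)))
  · intro q hq
    simp only [pairSet, Finset.mem_coe, Finset.mem_filter] at hq
    obtain ⟨-, h1, h2⟩ := hq
    rw [Finset.mem_coe, Finset.mem_powersetCard]
    constructor
    · intro x hx
      rw [Finset.mem_insert, Finset.mem_singleton] at hx
      rcases hx with rfl | rfl
      · exact Finset.mem_erase.mpr ⟨h1.ne', Finset.mem_univ _⟩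
      · exact Finset.mem_erase.mpr ⟨(h1.trans h2).ne', Finset.mem_univ _⟩
    · rw [Finset.card_insert_of_notMem (by simp [h2.ne]), Finset.card_singleton]
  · intro q hq q' hq' heq
    simp only [pairSet, Finset.coe_filter, Set.mem_setOf_eq] at hq hq'
    have h2 : q.1 < q.2 := hq.2.2
    have h2' : q'.1 < q'.2 := hq'.2.2
    rw [← Finset.coe_inj, Finset.coe_insert, Finset.coe_singleton, Finset.coe_insert,
      Finset.coe_singleton, Set.pair_eq_pair_iff] at heq
    rcases heq with ⟨e1, e2⟩ | ⟨e1, e2⟩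
    · exact Prod.ext e1 e2
    · exfalso; rw [e1, e2] at h2; exact absurd (h2.trans h2') (lt_irrefl _)

lemma li_card_bound {n : ℕ} [NeZero n] (ω : Triple n → Bool) (s : Finset (Triple n))
    (hli : LinearIndependent ℝ (fun p : ↥s => oVec ω (p : Triple n))) :
    s.card ≤ (n - 1).choose 2 := by
  classical
  let u : ↥s → ↥(Msp n) := fun p => ⟨oVec ω (p : Triple n), oVec_mem ω _⟩
  have hu : LinearIndependent ℝ u := by
    apply LinearIndependent.of_comp (Msp n).subtype
    exact hli
  have h1 : Fintype.card ↥s ≤ Module.finrank ℝ ↥(Msp n) :=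
    hu.fintype_card_le_finrank
  have h2 : Module.finrank ℝ ↥(Msp n) ≤ (spanSet n).card :=
    finrank_span_finset_le_card (spanSet n)
  have h3 : (spanSet n).card ≤ (pairSet n).card := Finset.card_image_le
  have h4 := pairSet_card (n := n)
  rw [Fintype.card_coe] at h1
  omega

/-- From a cycle whose family of incidence vectors (with one element removed) is linearly
dependent, extract a strictly smaller cycle. -/
lemma shrink_cycle {n : ℕ} (ω : Triple n → Bool) (D C : Finset (Triple n))
    (hC : IsCycle ω D C) (p0 : Triple n) (hp0 : p0 ∈ C)
    (hdep : ¬ LinearIndependent ℝ (fun p : ↥(C.erase p0) => oVec ω (p : Triple n))) :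
    ∃ C', IsCycle ω D C' ∧ C'.card < C.card := by
  classical
  obtain ⟨hne, hCD, α, hαpos, hsum⟩ := hC
  rw [Fintype.not_linearIndependent_iff] at hdep
  obtain ⟨g0, hg0sum, i0, hgi0⟩ := hdep
  -- WLOG the nonzero coefficient is positive
  set g : ↥(C.erase p0) → ℝ := if 0 < g0 i0 then g0 else -g0 with hg
  have hgsum : ∑ i, g i • oVec ω (i : Triple n) = 0 := by
    rw [hg]; split
    · exact hg0sum
    · simp only [Pi.neg_apply, neg_smul, Finset.sum_neg_distrib, hg0sum, neg_zero]
  have hgi0pos : 0 < g i0 := by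
    rw [hg]; split
    · assumption
    · rename_i h; push_neg at h
      simp only [Pi.neg_apply]
      rcases lt_or_eq_of_le h with h' | h'
      · linarith
      · exact absurd h' hgi0
  -- Extend g to all triples
  set G : Triple n → ℝ := fun p => if h : p ∈ C.erase p0 then g ⟨p, h⟩ else 0 with hG
  have hGsum : ∑ p ∈ C.erase p0, G p • oVec ω p = 0 := by
    rw [← Finset.sum_attach (C.erase p0) (fun p => G p • oVec ω p)]
    rw [← hgsum]
    apply Finset.sum_congr rfl
    intro i _
    simp only [hG, dif_pos i.2]
  have hGp0 : G p0 = 0 := by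
    simp only [hG, dif_neg (fun h => (Finset.mem_erase.mp h).1 rfl)]
  -- the set where G is positive
  set S : Finset (Triple n) := (C.erase p0).filter (fun p => 0 < G p) with hS
  have hSne : S.Nonempty := by
    refine ⟨(i0 : Triple n), Finset.mem_filter.mpr ⟨i0.2, ?_⟩⟩
    simpa only [hG, dif_pos i0.2] using hgi0pos
  obtain ⟨pm, hpmS, hpmmin⟩ := S.exists_min_image (fun p => α p / G p) hSne
  have hpmC : pm ∈ C := Finset.mem_of_mem_erase (Finset.mem_filter.mp hpmS).1
  have hGpm : 0 < G pm := (Finset.mem_filter.mp hpmS).2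
  set t : ℝ := α pm / G pm with ht
  have htpos : 0 < t := div_pos (hαpos pm hpmC) hGpm
  set β : Triple n → ℝ := fun p => α p - t * G p with hβ
  have hβnn : ∀ p ∈ C, 0 ≤ β p := by
    intro p hp
    by_cases hpS : p ∈ S
    · have h1 : t ≤ α p / G p := hpmmin p hpS
      have h2 : 0 < G p := (Finset.mem_filter.mp hpS).2
      rw [le_div_iff₀ h2] at h1
      simp only [hβ]; linarith
    · have hGp : G p ≤ 0 := by
        by_cases hpe : p ∈ C.erase p0
        · by_contra h
          push_neg at h
          exact hpS (Finset.mem_filter.mpr ⟨hpe, h⟩)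
        · simp only [hG]
          rw [dif_neg hpe]
      have := hαpos p hp
      simp only [hβ]; nlinarith
  have hβpm : β pm = 0 := by
    simp only [hβ, ht]
    field_simp
    ring
  have hβp0 : 0 < β p0 := by
    simp only [hβ, hGp0]
    simpa using hαpos p0 hp0
  have hβsum : ∑ p ∈ C, β p • oVec ω p = 0 := by
    have hCG : ∑ p ∈ C, G p • oVec ω p = 0 := by
      rw [← Finset.add_sum_erase C _ hp0, hGp0, zero_smul, zero_add]
      exact hGsum
    have : ∑ p ∈ C, β p • oVec ω p
        = ∑ p ∈ C, α p • oVec ω p - t • ∑ p ∈ C, G p • oVec ω p := by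
      rw [Finset.smul_sum, ← Finset.sum_sub_distrib]
      apply Finset.sum_congr rfl
      intro p _
      simp only [hβ, sub_smul, smul_smul]
    rw [this, hsum, hCG, smul_zero, sub_zero]
  refine ⟨C.filter (fun p => 0 < β p), ⟨⟨p0, Finset.mem_filter.mpr ⟨hp0, hβp0⟩⟩,
    (Finset.filter_subset _ _).trans hCD, β, fun p hp => (Finset.mem_filter.mp hp).2, ?_⟩, ?_⟩
  · rw [Finset.sum_filter_of_ne]
    · exact hβsum
    · intro p hp hne0
      have hβp : β p ≠ 0 := fun h => hne0 (by rw [h, zero_smul])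
      exact lt_of_le_of_ne (hβnn p hp) (Ne.symm hβp)
  · apply Finset.card_lt_card
    refine ⟨Finset.filter_subset _ _, fun hsub => ?_⟩
    have := Finset.mem_filter.mp (hsub hpmC)
    rw [hβpm] at this
    exact absurd this.2 (lt_irrefl 0)

/-- If a 3-tournament on `n` vertices contains a cycle, then it contains a cycle of length
at most `C(n-1, 2) + 1`. -/
theorem shortCycle_tournament (n : ℕ) (ω : Triple n → Bool)
    (hcyc : ∃ C, IsCycle ω (allTriples n) C) :
    ∃ C, IsCycle ω (allTriples n) C ∧ C.card ≤ (n - 1).choose 2 + 1 := by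
  classical
  obtain ⟨C, hC⟩ := hcyc
  obtain ⟨p, hp⟩ := hC.1
  haveI : NeZero n := ⟨(Fin.pos p.1).ne'⟩
  have key : ∀ k (C : Finset (Triple n)), C.card ≤ k → IsCycle ω (allTriples n) C →
      ∃ C', IsCycle ω (allTriples n) C' ∧ C'.card ≤ (n - 1).choose 2 + 1 := by
    intro k
    induction k with
    | zero =>
      intro C hcard hC
      obtain ⟨q, hq⟩ := hC.1
      rw [Nat.le_zero, Finset.card_eq_zero] at hcard
      rw [hcard] at hq
      exact absurd hq (Finset.notMem_empty q)
    | succ k ih =>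
      intro C hcard hC
      by_cases hle : C.card ≤ (n - 1).choose 2 + 1
      · exact ⟨C, hC, hle⟩
      · push_neg at hle
        obtain ⟨p0, hp0⟩ := hC.1
        have hdep : ¬ LinearIndependent ℝ (fun p : ↥(C.erase p0) => oVec ω (p : Triple n)) := by
          intro hli
          have hb := li_card_bound ω (C.erase p0) hli
          rw [Finset.card_erase_of_mem hp0] at hb
          omega
        obtain ⟨C', hC', hlt⟩ := shrink_cycle ω (allTriples n) C hC p0 hp0 hdep
        exact ih C' (by omega) hC'
  exact key C.card C le_rfl hC
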